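/- Let G be a group acting by isometries on a metric space X, and suppose the action is acylindrical: for every ε ≥ 0 there exist N > 0 and R > 0 such that for all x, y ∈ X with d(x,y) ≥ R, the set {g ∈ G : d(x, gx) ≤ ε and d(y, gy) ≤ ε} has at most N elements. If g ∈ G is a loxodromic element (i.e., for some x ∈ X and constants λ > 0, C ≥ 0, one has d(gⁿx, gᵐx) ≥ λ|n−m| − C for all integers n, m), then the centralizer of g in G is countable. -/
import Mathlib


/-- If a group `G` acts acylindrically by isometries on a metric space `X`
and `g ∈ G` is loxodromic, then the centralizer of `g` is countable. -/
theorem stmt_4 {G X : Type*} [Group G] [MetricSpace X] [MulAction G X]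
    (hiso : ∀ g : G, Isometry (fun x : X => g • x))
    (hacyl : ∀ ε : ℝ, 0 ≤ ε → ∃ N : ℕ, 0 < N ∧ ∃ R : ℝ, 0 < R ∧
      ∀ x y : X, R ≤ dist x y →
        {h : G | dist x (h • x) ≤ ε ∧ dist y (h • y) ≤ ε}.Finite ∧
        {h : G | dist x (h • x) ≤ ε ∧ dist y (h • y) ≤ ε}.ncard ≤ N)
    (g : G)
    (hlox : ∃ x : X, ∃ l C : ℝ, 0 < l ∧ 0 ≤ C ∧
      ∀ n m : ℤ, l * |(n : ℝ) - m| - C ≤ dist (g ^ n • x) (g ^ m • x)) :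
    {h : G | h * g = g * h}.Countable := by
  obtain ⟨x, l, C, hl, hC, hd⟩ := hlox
  have key : ∀ k : ℕ, ({h : G | h * g = g * h ∧ dist x (h • x) ≤ (k : ℝ)}).Countable := by
    intro k
    obtain ⟨N, hN, R, hR, hfin⟩ := hacyl k (Nat.cast_nonneg k)
    set n : ℤ := ⌈(R + C) / l⌉ with hn
    have hn0 : (0 : ℝ) ≤ (R + C) / l := div_nonneg (by linarith) hl.le
    have hnge : (R + C) / l ≤ (n : ℝ) := Int.le_ceil _
    have hdist : R ≤ dist x (g ^ n • x) := by
      have h1 := hd n 0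
      simp only [zpow_zero, one_smul, Int.cast_zero, sub_zero] at h1
      have habs : |(n : ℝ)| = (n : ℝ) := abs_of_nonneg (le_trans hn0 hnge)
      rw [habs] at h1
      have hln : R + C ≤ (n : ℝ) * l := (div_le_iff₀ hl).mp hnge
      rw [dist_comm]
      nlinarith
    have hsub : {h : G | h * g = g * h ∧ dist x (h • x) ≤ (k : ℝ)} ⊆
        {h : G | dist x (h • x) ≤ (k : ℝ) ∧ dist (g ^ n • x) (h • g ^ n • x) ≤ (k : ℝ)} := by
      rintro h ⟨hcomm, hle⟩
      refine ⟨hle, ?_⟩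
      have hc : Commute h (g ^ n) := Commute.zpow_right hcomm n
      have heq : h • g ^ n • x = g ^ n • (h • x) := by
        rw [smul_smul, hc.eq, mul_smul]
      rw [heq]
      have hiso' : dist (g ^ n • x) (g ^ n • (h • x)) = dist x (h • x) :=
        (hiso (g ^ n)).dist_eq x (h • x)
      rw [hiso']
      exact hle
    exact Set.Countable.mono hsub ((hfin x (g ^ n • x) hdist).1.countable)
  have hsub : {h : G | h * g = g * h} ⊆
      ⋃ k : ℕ, {h : G | h * g = g * h ∧ dist x (h • x) ≤ (k : ℝ)} := by
    intro h hh
    exact Set.mem_iUnion.2 ⟨⌈dist x (h • x)⌉₊, hh, Nat.le_ceil _⟩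
  exact (Set.countable_iUnion key).mono hsub
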